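/- Let b be a continuous symmetric positive-definite bilinear form on a Hilbert space X and q a quadratic functional with second derivative b. Suppose x minimizes q over x_0+V and δx ≠ 0 with b(δx,δx) > 0. Define the exact line-search step ω = -q'(x)(δx)/b(δx,δx) and x_+ = x + ω δx. If x_* is the global minimizer of q on x_0+V and δx ∈ V with q'(x_*)(δx)=0, then b(x_+ - x_*, x_+ - x) = 0 and consequently ‖x_* - x‖_b² = ‖x_* - x_+‖_b² + ‖x_+ - x‖_b², where ‖v‖_b² := b(v,v). -/

import Mathlib

/-- Exact line search for a quadratic functional: the new iterate
`x_+ = x + ω δx` with `ω = -q'(x)(δx)/b(δx,δx)` satisfies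
`b(x_+ - x_*, x_+ - x) = 0`, and the Pythagoras identity
`‖x_* - x‖_b² = ‖x_* - x_+‖_b² + ‖x_+ - x‖_b²` holds. -/
theorem stmt3
    {X : Type*} [NormedAddCommGroup X] [InnerProductSpace ℝ X] [CompleteSpace X]
    (q : X → ℝ) (D : X → (X →L[ℝ] ℝ)) (b : X →L[ℝ] X →L[ℝ] ℝ)
    (hderiv : ∀ y, HasFDerivAt q (D y) y)
    (hsymm : ∀ y z, b y z = b z y)
    (hquad : ∀ y δ, q (y + δ) = q y + D y δ + b δ δ / 2)
    (hpos : ∀ y, y ≠ 0 → 0 < b y y)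
    (V : Submodule ℝ X) (x0 x xstar δx : X)
    (hx : x - x0 ∈ V) (hxstar : xstar - x0 ∈ V)
    (hopt : ∀ v ∈ V, D xstar v = 0)
    (hδV : δx ∈ V) (hδne : δx ≠ 0) (hbδ : 0 < b δx δx) :
    b (x + (-(D x δx) / b δx δx) • δx - xstar)
      ((x + (-(D x δx) / b δx δx) • δx) - x) = 0 ∧
    b (xstar - x) (xstar - x)
      = b (xstar - (x + (-(D x δx) / b δx δx) • δx))
          (xstar - (x + (-(D x δx) / b δx δx) • δx))
        + b ((x + (-(D x δx) / b δx δx) • δx) - x)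
            ((x + (-(D x δx) / b δx δx) • δx) - x) := by
  -- key: D (y + d) v = D y v + b d v
  have key : ∀ y d v : X, D (y + d) v = D y v + b d v := by
    intro y d v
    have h1 := hquad y (d + v)
    have h2 := hquad (y + d) v
    have h3 := hquad y d
    rw [← add_assoc] at h1
    rw [h1, h3] at h2
    have hb : b (d + v) (d + v) = b d d + 2 * b d v + b v v := by
      simp [map_add, ContinuousLinearMap.add_apply]
      have := hsymm v d
      ring_nf
      linarith
    have hD : D y (d + v) = D y d + D y v := by simp
    rw [hb, hD] at h2
    linarith
  set ω : ℝ := -(D x δx) / b δx δx with hω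
  set xp : X := x + ω • δx with hxp
  have hbne : b δx δx ≠ 0 := ne_of_gt hbδ
  -- D xp δx = 0
  have hDxp : D xp δx = 0 := by
    rw [hxp, key x (ω • δx) δx]
    have : b (ω • δx) δx = ω * b δx δx := by simp
    rw [this, hω]
    field_simp
    ring
  -- b (xp - xstar) δx = 0
  have horth : b (xp - xstar) δx = 0 := by
    have := key xstar (xp - xstar) δx
    rw [add_sub_cancel] at this
    rw [hDxp, hopt δx hδV] at this
    linarith
  have hstep : xp - x = ω • δx := by simp [hxp]
  have h1 : b (xp - xstar) (xp - x) = 0 := by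
    rw [hstep]
    have : b (xp - xstar) (ω • δx) = ω * b (xp - xstar) δx := by simp
    rw [this, horth, mul_zero]
  refine ⟨h1, ?_⟩
  -- Pythagoras
  have hdecomp : xstar - x = (xstar - xp) + (xp - x) := by abel
  rw [hdecomp]
  have expand : b ((xstar - xp) + (xp - x)) ((xstar - xp) + (xp - x))
      = b (xstar - xp) (xstar - xp) + 2 * b (xstar - xp) (xp - x)
        + b (xp - x) (xp - x) := by
    simp only [map_add, ContinuousLinearMap.add_apply]
    have := hsymm (xp - x) (xstar - xp)
    linarith
  rw [expand]
  have : b (xstar - xp) (xp - x) = - b (xp - xstar) (xp - x) := by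
    have : xstar - xp = -(xp - xstar) := by abel
    rw [this]; simp
  rw [this, h1]
  ring
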